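/- Let f(x) = a_n x^n + ⋯ + a_0 be a polynomial of degree n with integer coefficients and let q be an odd prime. Suppose a_0 is not divisible by q, the congruence f(x) ≡ 0 (mod q) has exactly ℓ solutions in ℤ/qℤ, and exactly b of these solutions are quadratic residues modulo q. Then R(f(x), x^{(q−1)/2} − 1) ≡ 0 (mod q^b). -/

import Mathlib

open Polynomial

/-- The Sylvester matrix of two integer polynomials `f` (of degree `n = f.natDegree`)
and `g` (of degree `m = g.natDegree`): an `(m + n) × (m + n)` matrix whose first `m`
rows are shifted copies of the coefficients of `f` (in decreasing order of degree)
and whose last `n` rows are shifted copies of the coefficients of `g`. -/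
def sylvesterMatrix (f g : Polynomial ℤ) :
    Matrix (Fin (g.natDegree + f.natDegree)) (Fin (g.natDegree + f.natDegree)) ℤ :=
  Matrix.of fun i j =>
    if (i : ℕ) < g.natDegree then
      if (i : ℕ) ≤ (j : ℕ) ∧ (j : ℕ) ≤ (i : ℕ) + f.natDegree then
        f.coeff (f.natDegree - ((j : ℕ) - (i : ℕ)))
      else 0
    else
      if (i : ℕ) - g.natDegree ≤ (j : ℕ) ∧ (j : ℕ) ≤ ((i : ℕ) - g.natDegree) + g.natDegree then
        g.coeff (g.natDegree - ((j : ℕ) - ((i : ℕ) - g.natDegree)))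
      else 0

/-- The resultant `R(f, g)` of two integer polynomials, i.e. the determinant of their
Sylvester matrix. -/
def resultant (f g : Polynomial ℤ) : ℤ :=
  (sylvesterMatrix f g).det

/-- **Theorem 3, first part.** Let `f` be an integer polynomial of degree `n`, `q` an
odd prime with `q ∤ a_0`, and suppose `f(x) ≡ 0 (mod q)` has exactly `ℓ` solutions,
of which exactly `b` are quadratic residues mod `q`. Then
`R(f(x), x^{(q-1)/2} - 1) ≡ 0 (mod q^b)`. -/
lemma keyA (q : ℕ) [Fact q.Prime] : ∀ (b : ℕ) (N : ℕ) (M : Matrix (Fin N) (Fin N) ℤ)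
    (v : Fin b → Fin N → ZMod q),
    LinearIndependent (ZMod q) v →
    (∀ s, (M.map (Int.cast : ℤ → ZMod q)).mulVec (v s) = 0) →
    (q : ℤ) ^ b ∣ M.det := by
  intro b
  induction b with
  | zero => intro N M v _ _; simp
  | succ b IH =>
    intro N M v hli hker
    -- pick a coordinate where v 0 is nonzero
    have hv0 : v 0 ≠ 0 := hli.ne_zero 0
    obtain ⟨j, hj⟩ : ∃ j, v 0 j ≠ 0 := by
      by_contra h
      push_neg at h
      exact hv0 (funext h)
    -- integer lift of v 0
    set c : Fin N → ℤ := fun k => ((v 0 k).val : ℤ) with hc_def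
    have hc : ∀ k, ((c k : ℤ) : ZMod q) = v 0 k := by
      intro k
      simp [hc_def, ZMod.natCast_val, ZMod.cast_id]
    set d : Fin N → ℤ := M.mulVec c with hd_def
    have hqd : ∀ i, (q : ℤ) ∣ d i := by
      intro i
      rw [← ZMod.intCast_zmod_eq_zero_iff_dvd]
      have h1 : ((d i : ℤ) : ZMod q) = ((M.map (Int.cast : ℤ → ZMod q)).mulVec (v 0)) i := by
        simp only [hd_def, Matrix.mulVec, dotProduct, Matrix.map_apply]
        push_cast
        exact Finset.sum_congr rfl (fun k _ => by rw [hc])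
      rw [h1, hker 0]
      rfl
    set w : Fin N → ℤ := fun i => d i / q with hw_def
    have hdw : d = (q : ℤ) • w := by
      funext i
      simp [hw_def, Pi.smul_apply, smul_eq_mul]
      exact (Int.mul_ediv_cancel' (hqd i)).symm
    set M₂ : Matrix (Fin N) (Fin N) ℤ := M.updateCol j w with hM2
    -- determinant identity
    have hdet1 : (M.updateCol j d).det = M.det * c j := by
      have h1 : (M.updateCol j d).det = Matrix.cramer M d j := (Matrix.cramer_apply M d j).symm
      rw [h1, hd_def]
      have : Matrix.cramer M (M.mulVec c) = M.det • c := by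
        rw [Matrix.cramer_eq_adjugate_mulVec, Matrix.mulVec_mulVec, Matrix.adjugate_mul,
          Matrix.smul_mulVec, Matrix.one_mulVec]
      rw [this]; simp [smul_eq_mul]
    have hdet2 : (M.updateCol j d).det = (q : ℤ) * M₂.det := by
      rw [hdw, hM2]
      exact Matrix.det_updateCol_smul M j (q : ℤ) w
    -- new kernel vectors
    set v' : Fin b → Fin N → ZMod q := fun s => v s.succ - (v s.succ j * (v 0 j)⁻¹) • v 0 with hv'
    have hv'j : ∀ s, v' s j = 0 := by
      intro s
      simp [hv', mul_assoc, inv_mul_cancel₀ hj]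
    have hkerM : ∀ s, (M.map (Int.cast : ℤ → ZMod q)).mulVec (v' s) = 0 := by
      intro s
      rw [hv', Matrix.mulVec_sub, Matrix.mulVec_smul, hker, hker]
      simp
    have hker2 : ∀ s, (M₂.map (Int.cast : ℤ → ZMod q)).mulVec (v' s) = 0 := by
      intro s
      rw [← hkerM s]
      funext i
      simp only [Matrix.mulVec, dotProduct]
      apply Finset.sum_congr rfl
      intro k _
      by_cases hk : k = j
      · subst hk; rw [hv'j s]; ring
      · simp [hM2, Matrix.updateCol_apply, hk]
    have hli' : LinearIndependent (ZMod q) v' := by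
      rw [Fintype.linearIndependent_iff]
      intro g hg s
      have hgl : ∑ t : Fin (b + 1),
          (Fin.cases (-(∑ s : Fin b, g s * (v s.succ j * (v 0 j)⁻¹))) g t : ZMod q) • v t = 0 := by
        rw [Fin.sum_univ_succ]
        simp only [Fin.cases_zero, Fin.cases_succ]
        have expand : ∑ s : Fin b, g s • v' s =
            (∑ s : Fin b, g s • v s.succ) -
              (∑ s : Fin b, g s * (v s.succ j * (v 0 j)⁻¹)) • v 0 := by
          rw [Finset.sum_smul, ← Finset.sum_sub_distrib]
          exact Finset.sum_congr rfl (fun s _ => by rw [hv']; rw [smul_sub, smul_smul])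
        rw [expand] at hg
        rw [neg_smul, add_comm, ← sub_eq_add_neg]
        exact hg
      have := Fintype.linearIndependent_iff.mp hli _ hgl
      simpa using this s.succ
    have hIH : (q : ℤ) ^ b ∣ M₂.det := IH N M₂ v' hli' hker2
    obtain ⟨t, ht⟩ := hIH
    have key : (q : ℤ) ^ (b + 1) ∣ M.det * c j := by
      rw [← hdet1, hdet2, ht]
      exact ⟨t, by ring⟩
    have hcop : IsCoprime ((q : ℤ) ^ (b + 1)) (c j) := by
      apply IsCoprime.pow_left
      rw [Prime.coprime_iff_not_dvd ((Nat.prime_iff_prime_int.mp Fact.out))]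
      intro hdvd
      apply hj
      rw [← hc j, (ZMod.intCast_zmod_eq_zero_iff_dvd (c j) q).mpr hdvd]
    exact hcop.dvd_of_dvd_mul_right key

theorem resultant_halfpow_sub_one_dvd (q : ℕ) [Fact q.Prime] (hodd : Odd q)
    (f : Polynomial ℤ) (n : ℕ) (hn : f.natDegree = n)
    (ha0 : ¬ (q : ℤ) ∣ f.coeff 0)
    (ℓ : ℕ)
    (hℓ : (Finset.univ.filter fun x : ZMod q =>
        (f.map (Int.castRingHom (ZMod q))).eval x = 0).card = ℓ)
    (b : ℕ)
    (hb : (Finset.univ.filter fun x : ZMod q =>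
        (f.map (Int.castRingHom (ZMod q))).eval x = 0 ∧ ∃ y : ZMod q, x = y ^ 2).card = b) :
    (q : ℤ) ^ b ∣ _root_.resultant f (X ^ ((q - 1) / 2) - 1) := by
  classical
  have hq : q.Prime := Fact.out
  have hq2 : q ≠ 2 := by rintro rfl; revert hodd; decide
  have hq3 : 3 ≤ q := by
    have := hq.two_le
    omega
  set m : ℕ := (q - 1) / 2 with hm_def
  have h2m : 2 * m = q - 1 := by
    obtain ⟨k, hk⟩ := hodd
    omega
  have hm1 : 1 ≤ m := by omega
  set g : Polynomial ℤ := X ^ m - 1 with hg_def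
  have hgdeg : g.natDegree = m := by
    rw [hg_def, show (1 : Polynomial ℤ) = C 1 from rfl, natDegree_X_pow_sub_C]
  set N : ℕ := g.natDegree + f.natDegree with hN_def
  have hNm : N = m + f.natDegree := by rw [hN_def, hgdeg]
  set S : Finset (ZMod q) := Finset.univ.filter fun x : ZMod q =>
      (f.map (Int.castRingHom (ZMod q))).eval x = 0 ∧ ∃ y : ZMod q, x = y ^ 2 with hS_def
  -- every element of S is nonzero
  have hS0 : ∀ x ∈ S, x ≠ 0 := by
    intro x hx hx0
    rw [hS_def, Finset.mem_filter] at hx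
    obtain ⟨-, hroot, -⟩ := hx
    rw [hx0, ← Polynomial.coeff_zero_eq_eval_zero, Polynomial.coeff_map] at hroot
    exact ha0 ((ZMod.intCast_zmod_eq_zero_iff_dvd _ q).mp hroot)
  -- every element of S is an m-th root of unity
  have hSm : ∀ x ∈ S, x ^ m = 1 := by
    intro x hx
    have hx' := hx
    rw [hS_def, Finset.mem_filter] at hx'
    obtain ⟨-, -, y, hy⟩ := hx'
    have hy0 : y ≠ 0 := by
      rintro rfl
      exact hS0 x hx (by simpa using hy)
    rw [hy, ← pow_mul, show 2 * m = q - 1 from h2m]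
    exact ZMod.pow_card_sub_one_eq_one hy0
  -- elements of S are roots of f mod q
  have hSf : ∀ x ∈ S, (f.map (Int.castRingHom (ZMod q))).eval x = 0 := by
    intro x hx
    rw [hS_def, Finset.mem_filter] at hx
    exact hx.2.1
  -- b ≤ m
  have hbm : b ≤ m := by
    have hsub : S ⊆ ((X ^ m - 1 : Polynomial (ZMod q)).roots).toFinset := by
      intro x hx
      have hpne : (X ^ m - 1 : Polynomial (ZMod q)) ≠ 0 := by
        intro h0
        have h1 := Polynomial.natDegree_X_pow_sub_C (n := m) (r := (1 : ZMod q))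
        rw [show (C (1:ZMod q)) = 1 from map_one C, h0] at h1
        simp at h1
        omega
      rw [Multiset.mem_toFinset, Polynomial.mem_roots hpne]
      show Polynomial.eval x _ = 0
      simp [hSm x hx]
    calc b = S.card := hb.symm
      _ ≤ _ := Finset.card_le_card hsub
      _ ≤ Multiset.card (X ^ m - 1 : Polynomial (ZMod q)).roots := Multiset.toFinset_card_le _
      _ ≤ (X ^ m - 1 : Polynomial (ZMod q)).natDegree := Polynomial.card_roots' _
      _ = m := by
        rw [show (1 : Polynomial (ZMod q)) = C 1 from rfl, natDegree_X_pow_sub_C]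
  have hbN : b ≤ N := by omega
  have hN1 : 1 ≤ N := by omega
  -- enumerate S
  have hScard : S.card = b := hb
  set σ : Fin b → ZMod q := fun s => ((S.equivFin.symm (Fin.cast hScard.symm s)) : ZMod q)
    with hσ_def
  have hσS : ∀ s, σ s ∈ S := fun s => (S.equivFin.symm (Fin.cast hScard.symm s)).2
  have hσinj : Function.Injective σ := by
    intro s t hst
    have := Subtype.coe_injective hst
    have := S.equivFin.symm.injective this
    exact Fin.cast_injective _ this
  -- the kernel vectors
  set v : Fin b → Fin N → ZMod q := fun s j => σ s ^ (N - 1 - (j : ℕ)) with hv_def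
  -- linear independence via Vandermonde
  have hli : LinearIndependent (ZMod q) v := by
    set φ : Fin b → Fin N := fun t => ⟨N - 1 - (t : ℕ), by omega⟩ with hφ_def
    apply LinearIndependent.of_comp (LinearMap.funLeft (ZMod q) (ZMod q) φ)
    have hcomp : (LinearMap.funLeft (ZMod q) (ZMod q) φ) ∘ v
        = fun s => Matrix.vandermonde σ s := by
      funext s t
      have ht : (t : ℕ) < b := t.2
      simp only [Function.comp_apply, LinearMap.funLeft_apply, hv_def, hφ_def,
        Matrix.vandermonde]
      congr 1
      omega
    rw [hcomp]
    rw [show (fun s => Matrix.vandermonde σ s) = (Matrix.vandermonde σ).row from rfl,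
      Matrix.linearIndependent_rows_iff_isUnit, Matrix.isUnit_iff_isUnit_det]
    rw [isUnit_iff_ne_zero]
    exact Matrix.det_vandermonde_ne_zero_iff.mpr hσinj
  -- kernel property
  have hker : ∀ s, ((sylvesterMatrix f g).map (Int.cast : ℤ → ZMod q)).mulVec (v s) = 0 := by
    intro s
    set ζ : ZMod q := σ s with hζ_def
    have hζf : (f.map (Int.castRingHom (ZMod q))).eval ζ = 0 := hSf _ (hσS s)
    have hζm : ζ ^ m = 1 := hSm _ (hσS s)
    funext i
    simp only [Matrix.mulVec, dotProduct, Matrix.map_apply, Pi.zero_apply]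
    set F : ℕ → ZMod q := fun jn =>
            (if (i : ℕ) < g.natDegree then
              (if (i : ℕ) ≤ jn ∧ jn ≤ (i : ℕ) + f.natDegree then
                ((f.coeff (f.natDegree - (jn - (i : ℕ))) : ℤ) : ZMod q) else 0)
            else
              (if (i : ℕ) - g.natDegree ≤ jn ∧ jn ≤ ((i : ℕ) - g.natDegree) + g.natDegree then
                ((g.coeff (g.natDegree - (jn - ((i : ℕ) - g.natDegree))) : ℤ) : ZMod q) else 0))
            * ζ ^ (N - 1 - jn) with hF_def
    have hterm : ∀ j : Fin N, ((sylvesterMatrix f g i j : ℤ) : ZMod q) * v s j = F (j : ℕ) := by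
      intro j
      rw [hF_def]
      simp only [sylvesterMatrix, Matrix.of_apply, hv_def]
      split_ifs <;> simp [hζ_def]
    rw [Finset.sum_congr rfl (fun j _ => hterm j)]
    rw [Fin.sum_univ_eq_sum_range F N]
    simp only [hF_def]
    by_cases hi : (i : ℕ) < g.natDegree
    · -- f-row
      have hiN : (i : ℕ) + f.natDegree < N := by
        rw [hNm]; omega
      simp only [hi, if_true]
      rw [← Finset.sum_subset (s₁ := Finset.Icc (i : ℕ) ((i : ℕ) + f.natDegree))
        (fun j hj => Finset.mem_range.mpr (by
          rw [Finset.mem_Icc] at hj; omega))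
        (fun j _ hj => by
          rw [Finset.mem_Icc] at hj
          rw [if_neg hj, zero_mul])]
      rw [show Finset.Icc (i : ℕ) ((i : ℕ) + f.natDegree) = Finset.Ico (i : ℕ) ((i : ℕ) + f.natDegree + 1) by
        rw [Finset.Ico_add_one_right_eq_Icc]]
      rw [Finset.sum_Ico_eq_sum_range]
      rw [show (i : ℕ) + f.natDegree + 1 - (i : ℕ) = f.natDegree + 1 by omega]
      rw [← Finset.sum_range_reflect]
      have hstep : ∀ k ∈ Finset.range (f.natDegree + 1),
          (if (i : ℕ) ≤ (i : ℕ) + (f.natDegree + 1 - 1 - k) ∧ (i : ℕ) + (f.natDegree + 1 - 1 - k) ≤ (i : ℕ) + f.natDegree then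
            ((f.coeff (f.natDegree - ((i : ℕ) + (f.natDegree + 1 - 1 - k) - (i : ℕ))) : ℤ) : ZMod q) else 0)
            * ζ ^ (N - 1 - ((i : ℕ) + (f.natDegree + 1 - 1 - k)))
          = ζ ^ (N - 1 - (i : ℕ) - f.natDegree) *
            (((f.map (Int.castRingHom (ZMod q))).coeff k) * ζ ^ k) := by
        intro k hk
        rw [Finset.mem_range] at hk
        rw [if_pos (by omega)]
        rw [show f.natDegree - ((i : ℕ) + (f.natDegree + 1 - 1 - k) - (i : ℕ)) = k by omega]
        rw [show N - 1 - ((i : ℕ) + (f.natDegree + 1 - 1 - k)) = (N - 1 - (i : ℕ) - f.natDegree) + k by omega]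
        rw [pow_add, Polynomial.coeff_map]
        simp only [Int.coe_castRingHom]
        ring
      rw [Finset.sum_congr rfl hstep, ← Finset.mul_sum]
      have heval : ∑ k ∈ Finset.range (f.natDegree + 1),
          ((f.map (Int.castRingHom (ZMod q))).coeff k) * ζ ^ k
          = (f.map (Int.castRingHom (ZMod q))).eval ζ := by
        rw [Polynomial.eval_eq_sum_range' (n := f.natDegree + 1)
          (lt_of_le_of_lt (Polynomial.natDegree_map_le) (by omega))]
      rw [heval, hζf, mul_zero]
    · -- g-row
      have hii : g.natDegree ≤ (i : ℕ) := le_of_not_gt hi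
      have hiN : ((i : ℕ) - g.natDegree) + g.natDegree < N := by
        have := i.2
        omega
      simp only [hi, if_false]
      set i' : ℕ := (i : ℕ) - g.natDegree with hi'_def
      rw [← Finset.sum_subset (s₁ := Finset.Icc i' (i' + g.natDegree))
        (fun j hj => Finset.mem_range.mpr (by
          rw [Finset.mem_Icc] at hj; omega))
        (fun j _ hj => by
          rw [Finset.mem_Icc] at hj
          rw [if_neg hj, zero_mul])]
      rw [show Finset.Icc i' (i' + g.natDegree) = Finset.Ico i' (i' + g.natDegree + 1) by
        rw [Finset.Ico_add_one_right_eq_Icc]]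
      rw [Finset.sum_Ico_eq_sum_range]
      rw [show i' + g.natDegree + 1 - i' = g.natDegree + 1 by omega]
      rw [← Finset.sum_range_reflect]
      have hstep : ∀ k ∈ Finset.range (g.natDegree + 1),
          (if i' ≤ i' + (g.natDegree + 1 - 1 - k) ∧ i' + (g.natDegree + 1 - 1 - k) ≤ i' + g.natDegree then
            ((g.coeff (g.natDegree - (i' + (g.natDegree + 1 - 1 - k) - i')) : ℤ) : ZMod q) else 0)
            * ζ ^ (N - 1 - (i' + (g.natDegree + 1 - 1 - k)))
          = ζ ^ (N - 1 - i' - g.natDegree) *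
            (((g.map (Int.castRingHom (ZMod q))).coeff k) * ζ ^ k) := by
        intro k hk
        rw [Finset.mem_range] at hk
        rw [if_pos (by omega)]
        rw [show g.natDegree - (i' + (g.natDegree + 1 - 1 - k) - i') = k by omega]
        rw [show N - 1 - (i' + (g.natDegree + 1 - 1 - k)) = (N - 1 - i' - g.natDegree) + k by omega]
        rw [pow_add, Polynomial.coeff_map]
        simp only [Int.coe_castRingHom]
        ring
      rw [Finset.sum_congr rfl hstep, ← Finset.mul_sum]
      have heval : ∑ k ∈ Finset.range (g.natDegree + 1),
          ((g.map (Int.castRingHom (ZMod q))).coeff k) * ζ ^ k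
          = (g.map (Int.castRingHom (ZMod q))).eval ζ := by
        rw [Polynomial.eval_eq_sum_range' (n := g.natDegree + 1)
          (lt_of_le_of_lt (Polynomial.natDegree_map_le) (by omega))]
      have hgeval : (g.map (Int.castRingHom (ZMod q))).eval ζ = 0 := by
        rw [hg_def]
        simp [hζm]
      rw [heval, hgeval, mul_zero]
  exact keyA q b N (sylvesterMatrix f g) v hli hker
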